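/- Let (x*, y*, w*, z*, s*) be an extreme point of P = conv(Q) and let t ∈ {1, …, T} be a time period with Σ_{v∈𝒱} y*_{v,t} < s*_{t−1} (where s*_0 = s₀). Then among the 2V coordinates {x*_{v,t} : v ∈ 𝒱} ∪ {y*_{v,t} : v ∈ 𝒱}, at most one fails to belong to the three-element set consisting of 0, its lower bound, and its upper bound; that is, there is at most one coordinate with x*_{v,t} ∉ {0, L^x_{v,t}, U^x_{v,t}} or y*_{v,t} ∉ {0, L^y_{v,t}, U^y_{v,t}}. -/

import Mathlib

open scoped BigOperators

/-- A point of the warehouse problem: purchases `x`, sales `y`,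
purchase indicators `w`, sale indicators `z` (all indexed by vendor and time),
and stock levels `s` (indexed by time). -/
abbrev WPoint (V T : ℕ) :=
  (Fin V → Fin T → ℝ) × (Fin V → Fin T → ℝ) × (Fin V → Fin T → ℝ) ×
    (Fin V → Fin T → ℝ) × (Fin T → ℝ)

namespace WPoint

variable {V T : ℕ}

def x (p : WPoint V T) : Fin V → Fin T → ℝ := p.1
def y (p : WPoint V T) : Fin V → Fin T → ℝ := p.2.1
def w (p : WPoint V T) : Fin V → Fin T → ℝ := p.2.2.1
def z (p : WPoint V T) : Fin V → Fin T → ℝ := p.2.2.2.1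
def s (p : WPoint V T) : Fin T → ℝ := p.2.2.2.2

end WPoint

/-- A selector of one of the `x`/`y` decision variables. -/
structure WVar (V T : ℕ) where
  isX : Bool
  v : Fin V
  t : Fin T

/-- The value of the selected variable. -/
def WVar.val {V T : ℕ} (x y : Fin V → Fin T → ℝ) (u : WVar V T) : ℝ :=
  if u.isX then x u.v u.t else y u.v u.t

/-- The lower bound of the selected variable. -/
def WVar.lb {V T : ℕ} (Lx Ly : Fin V → Fin T → ℝ) (u : WVar V T) : ℝ :=
  if u.isX then Lx u.v u.t else Ly u.v u.t

/-- The upper bound of the selected variable. -/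
def WVar.ub {V T : ℕ} (Ux Uy : Fin V → Fin T → ℝ) (u : WVar V T) : ℝ :=
  if u.isX then Ux u.v u.t else Uy u.v u.t

/-- A generalized complementarity constraint `(V₁ - B₁)(V₂ - B₂) = 0`. -/
structure CompCon (V T : ℕ) where
  V1 : WVar V T
  V2 : WVar V T
  B1 : ℝ
  B2 : ℝ

/-- Validity of a complementarity tuple: the time index of `V₁` is at most that of `V₂`,
and each constant is zero or the lower or upper bound of the corresponding variable. -/
def ValidCompCon {V T : ℕ} (Lx Ux Ly Uy : Fin V → Fin T → ℝ) (c : CompCon V T) : Prop :=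
  c.V1.t ≤ c.V2.t ∧
  (c.B1 = 0 ∨ c.B1 = c.V1.lb Lx Ly ∨ c.B1 = c.V1.ub Ux Uy) ∧
  (c.B2 = 0 ∨ c.B2 = c.V2.lb Lx Ly ∨ c.B2 = c.V2.ub Ux Uy)

/-- The stock level at the end of period `t - 1` (the initial stock `s0` when `t = 1`). -/
def prevStock {T : ℕ} (s0 : ℝ) (s : Fin T → ℝ) (t : Fin T) : ℝ :=
  if _ : (t : ℕ) = 0 then s0 else s ⟨(t : ℕ) - 1, lt_of_le_of_lt (Nat.sub_le _ _) t.isLt⟩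

/-- The feasible region `Q` of the warehouse problem. -/
def Qset {V T : ℕ} (s0 : ℝ) (Ls Us : Fin T → ℝ) (Lx Ux Ly Uy : Fin V → Fin T → ℝ)
    (C : Finset (CompCon V T)) : Set (WPoint V T) :=
  { p | (∀ t, p.s t = prevStock s0 p.s t - ∑ v, p.y v t + ∑ v, p.x v t) ∧
        (∀ t, Ls t ≤ p.s t ∧ p.s t ≤ Us t) ∧
        (∀ t, ∑ v, p.y v t ≤ prevStock s0 p.s t) ∧
        (∀ c ∈ C, (c.V1.val p.x p.y - c.B1) * (c.V2.val p.x p.y - c.B2) = 0) ∧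
        (∀ v t, Ly v t * p.z v t ≤ p.y v t ∧ p.y v t ≤ Uy v t * p.z v t) ∧
        (∀ v t, Lx v t * p.w v t ≤ p.x v t ∧ p.x v t ≤ Ux v t * p.w v t) ∧
        (∀ v t, p.w v t = 0 ∨ p.w v t = 1) ∧
        (∀ v t, p.z v t = 0 ∨ p.z v t = 1) }

/-- The set `S` of candidate extreme stock levels. -/
def Sset {V T : ℕ} (s0 : ℝ) (Ls Us : Fin T → ℝ) (Lx Ux Ly Uy : Fin V → Fin T → ℝ) :
    Set ℝ :=
  { r | ∃ (K : ℝ) (lam : Fin 4 → Fin V → Fin T → ℝ),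
      (K = 0 ∨ K = s0 ∨ (∃ t, K = Ls t) ∨ (∃ t, K = Us t)) ∧
      (∀ j v t, lam j v t = -1 ∨ lam j v t = 0 ∨ lam j v t = 1) ∧
      r = K - ∑ t, ∑ v,
        (lam 0 v t * Ly v t + lam 1 v t * Uy v t + lam 2 v t * Lx v t + lam 3 v t * Ux v t) }

open scoped BigOperators

/-- unified coordinate value selector -/
def cval {V T : ℕ} (f g : Fin V → Fin T → ℝ) (t : Fin T) (c : Bool × Fin V) : ℝ :=
  if c.1 then f c.2 t else g c.2 t

/-- perturbation direction -/
def pert {V : ℕ} (c1 c2 : Bool × Fin V) (c : Bool × Fin V) : ℝ :=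
  (if c = c1 then 1 else 0) + (if c = c2 then (if c1.1 = c2.1 then (-1:ℝ) else 1) else 0)

lemma sum_ite_pair {V : ℕ} (b : Bool) (c : Bool × Fin V) (r : ℝ) :
    ∑ v : Fin V, (if (b, v) = c then r else 0) = if b = c.1 then r else 0 := by
  obtain ⟨b', v'⟩ := c
  by_cases hb : b = b'
  · subst hb
    simp [Prod.ext_iff]
  · simp [Prod.ext_iff, hb]

lemma pert_sum {V : ℕ} (c1 c2 : Bool × Fin V) (b : Bool) :
    ∑ v : Fin V, pert c1 c2 (b, v) =
      (if b = c1.1 then (1:ℝ) else 0) +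
        (if b = c2.1 then (if c1.1 = c2.1 then (-1:ℝ) else 1) else 0) := by
  unfold pert
  rw [Finset.sum_add_distrib, sum_ite_pair, sum_ite_pair]

lemma pert_abs_le {V : ℕ} (c1 c2 : Bool × Fin V) (h : c1 ≠ c2) (c : Bool × Fin V) :
    |pert c1 c2 c| ≤ 1 := by
  unfold pert
  by_cases h1 : c = c1
  · subst h1; simp [h]
  · by_cases h2 : c = c2
    · simp only [if_neg h1, if_pos h2, zero_add]
      split <;> norm_num
    · simp [h1, h2]

lemma pert_eq_zero {V : ℕ} (c1 c2 : Bool × Fin V) (c : Bool × Fin V)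
    (h1 : c ≠ c1) (h2 : c ≠ c2) : pert c1 c2 c = 0 := by
  simp [pert, h1, h2]

lemma pert_net {V : ℕ} (c1 c2 : Bool × Fin V) :
    ∑ v : Fin V, pert c1 c2 (true, v) = ∑ v : Fin V, pert c1 c2 (false, v) := by
  rw [pert_sum, pert_sum]
  rcases Bool.eq_false_or_eq_true c1.1 with h1 | h1 <;>
    rcases Bool.eq_false_or_eq_true c2.1 with h2 | h2 <;> simp [h1, h2]

lemma pert_sum_false {V : ℕ} (c1 c2 : Bool × Fin V) :
    ∑ v : Fin V, pert c1 c2 (false, v) = 0 ∨ ∑ v : Fin V, pert c1 c2 (false, v) = 1 := by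
  rw [pert_sum]
  rcases Bool.eq_false_or_eq_true c1.1 with h1 | h1 <;>
    rcases Bool.eq_false_or_eq_true c2.1 with h2 | h2 <;> simp [h1, h2]
def pertPoint {V T : ℕ} (p : WPoint V T) (c1 c2 : Bool × Fin V) (t : Fin T) (a : ℝ) :
    WPoint V T :=
  (fun v t' => WPoint.x p v t' + (if t' = t then a * pert c1 c2 (true, v) else 0),
   fun v t' => WPoint.y p v t' + (if t' = t then a * pert c1 c2 (false, v) else 0),
   WPoint.w p, WPoint.z p, WPoint.s p)

lemma pertPoint_x {V T : ℕ} (p : WPoint V T) (c1 c2 : Bool × Fin V) (t : Fin T) (a : ℝ) :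
    WPoint.x (pertPoint p c1 c2 t a) =
      fun v t' => WPoint.x p v t' + (if t' = t then a * pert c1 c2 (true, v) else 0) := rfl

lemma pertPoint_y {V T : ℕ} (p : WPoint V T) (c1 c2 : Bool × Fin V) (t : Fin T) (a : ℝ) :
    WPoint.y (pertPoint p c1 c2 t a) =
      fun v t' => WPoint.y p v t' + (if t' = t then a * pert c1 c2 (false, v) else 0) := rfl

lemma pertPoint_w {V T : ℕ} (p : WPoint V T) (c1 c2 : Bool × Fin V) (t : Fin T) (a : ℝ) :
    WPoint.w (pertPoint p c1 c2 t a) = WPoint.w p := rfl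

lemma pertPoint_z {V T : ℕ} (p : WPoint V T) (c1 c2 : Bool × Fin V) (t : Fin T) (a : ℝ) :
    WPoint.z (pertPoint p c1 c2 t a) = WPoint.z p := rfl

lemma pertPoint_s {V T : ℕ} (p : WPoint V T) (c1 c2 : Bool × Fin V) (t : Fin T) (a : ℝ) :
    WPoint.s (pertPoint p c1 c2 t a) = WPoint.s p := rfl

lemma pertPoint_sum_x {V T : ℕ} (p : WPoint V T) (c1 c2 : Bool × Fin V) (t : Fin T) (a : ℝ)
    (t' : Fin T) :
    ∑ v, WPoint.x (pertPoint p c1 c2 t a) v t' =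
      ∑ v, WPoint.x p v t' + (if t' = t then a * ∑ v, pert c1 c2 (true, v) else 0) := by
  rw [pertPoint_x, Finset.sum_add_distrib]
  congr 1
  by_cases h : t' = t <;> simp [h, Finset.mul_sum]

lemma pertPoint_sum_y {V T : ℕ} (p : WPoint V T) (c1 c2 : Bool × Fin V) (t : Fin T) (a : ℝ)
    (t' : Fin T) :
    ∑ v, WPoint.y (pertPoint p c1 c2 t a) v t' =
      ∑ v, WPoint.y p v t' + (if t' = t then a * ∑ v, pert c1 c2 (false, v) else 0) := by
  rw [pertPoint_y, Finset.sum_add_distrib]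
  congr 1
  by_cases h : t' = t <;> simp [h, Finset.mul_sum]

lemma pertPoint_val {V T : ℕ} (p : WPoint V T) (c1 c2 : Bool × Fin V) (t : Fin T) (a : ℝ)
    (u : WVar V T) :
    u.val (WPoint.x (pertPoint p c1 c2 t a)) (WPoint.y (pertPoint p c1 c2 t a)) =
      u.val (WPoint.x p) (WPoint.y p) + (if u.t = t then a * pert c1 c2 (u.isX, u.v) else 0) := by
  obtain ⟨b, v, t'⟩ := u
  cases b <;> simp [WVar.val, pertPoint_x, pertPoint_y]

theorem extremePoint_at_most_one_fractional_of_sales_lt {V T : ℕ} (s0 : ℝ)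
    (Ls Us : Fin T → ℝ) (Lx Ux Ly Uy : Fin V → Fin T → ℝ)
    (C : Finset (CompCon V T))
    (hLs : ∀ t, 0 ≤ Ls t) (hsLU : ∀ t, Ls t ≤ Us t)
    (hLx : ∀ v t, 0 ≤ Lx v t) (hxLU : ∀ v t, Lx v t ≤ Ux v t)
    (hLy : ∀ v t, 0 ≤ Ly v t) (hyLU : ∀ v t, Ly v t ≤ Uy v t)
    (hC : ∀ c ∈ C, ValidCompCon Lx Ux Ly Uy c)
    (p : WPoint V T)
    (hp : p ∈ Set.extremePoints ℝ (convexHull ℝ (Qset s0 Ls Us Lx Ux Ly Uy C)))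
    (t : Fin T)
    (hlt : ∑ v, WPoint.y p v t < prevStock s0 (WPoint.s p) t) :
    ({ c : Bool × Fin V |
        if c.1 then WPoint.x p c.2 t ∉ ({0, Lx c.2 t, Ux c.2 t} : Set ℝ)
        else WPoint.y p c.2 t ∉ ({0, Ly c.2 t, Uy c.2 t} : Set ℝ) }).Subsingleton := by
  classical
  intro c1 hc1 c2 hc2
  by_contra hne
  have hpQ : p ∈ Qset s0 Ls Us Lx Ux Ly Uy C :=
    extremePoints_convexHull_subset hp
  obtain ⟨hbal, hsb, hsale, hcomp, hyb, hxb, hw, hz⟩ := hpQ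
  -- fractional coordinates avoid 0 and bounds
  have hfrac : ∀ c, c = c1 ∨ c = c2 →
      cval (WPoint.x p) (WPoint.y p) t c ≠ 0 ∧
      cval (WPoint.x p) (WPoint.y p) t c ≠ cval Lx Ly t c ∧
      cval (WPoint.x p) (WPoint.y p) t c ≠ cval Ux Uy t c := by
    rintro c (rfl | rfl)
    · simp only [Set.mem_setOf_eq] at hc1
      obtain ⟨b, v⟩ := c
      cases b <;>
        simp only [cval, Bool.false_eq_true, if_false, if_true, Set.mem_insert_iff,
          Set.mem_singleton_iff, not_or] at hc1 ⊢ <;> exact hc1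
    · simp only [Set.mem_setOf_eq] at hc2
      obtain ⟨b, v⟩ := c
      cases b <;>
        simp only [cval, Bool.false_eq_true, if_false, if_true, Set.mem_insert_iff,
          Set.mem_singleton_iff, not_or] at hc2 ⊢ <;> exact hc2
  -- indicators are 1 and strict bounds hold at fractional coordinates
  have hind : ∀ c, c = c1 ∨ c = c2 →
      cval (WPoint.w p) (WPoint.z p) t c = 1 ∧
      cval Lx Ly t c < cval (WPoint.x p) (WPoint.y p) t c ∧
      cval (WPoint.x p) (WPoint.y p) t c < cval Ux Uy t c := by
    intro c hc
    obtain ⟨h0, hl, hu⟩ := hfrac c hc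
    obtain ⟨b, v⟩ := c
    cases b
    · simp only [cval, Bool.false_eq_true, if_false] at h0 hl hu ⊢
      rcases hz v t with h | h
      · exfalso
        have hb := hyb v t
        rw [h] at hb
        simp only [mul_zero] at hb
        exact h0 (le_antisymm hb.2 hb.1)
      · refine ⟨h, ?_, ?_⟩
        · have hb := (hyb v t).1
          rw [h, mul_one] at hb
          exact lt_of_le_of_ne hb (Ne.symm hl)
        · have hb := (hyb v t).2
          rw [h, mul_one] at hb
          exact lt_of_le_of_ne hb hu
    · simp only [cval, if_true] at h0 hl hu ⊢
      rcases hw v t with h | h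
      · exfalso
        have hb := hxb v t
        rw [h] at hb
        simp only [mul_zero] at hb
        exact h0 (le_antisymm hb.2 hb.1)
      · refine ⟨h, ?_, ?_⟩
        · have hb := (hxb v t).1
          rw [h, mul_one] at hb
          exact lt_of_le_of_ne hb (Ne.symm hl)
        · have hb := (hxb v t).2
          rw [h, mul_one] at hb
          exact lt_of_le_of_ne hb hu
  obtain ⟨hw1, hl1, hu1⟩ := hind c1 (Or.inl rfl)
  obtain ⟨hw2, hl2, hu2⟩ := hind c2 (Or.inr rfl)
  set ε : ℝ := min
      (min (cval (WPoint.x p) (WPoint.y p) t c1 - cval Lx Ly t c1)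
        (cval Ux Uy t c1 - cval (WPoint.x p) (WPoint.y p) t c1))
      (min
        (min (cval (WPoint.x p) (WPoint.y p) t c2 - cval Lx Ly t c2)
          (cval Ux Uy t c2 - cval (WPoint.x p) (WPoint.y p) t c2))
        (prevStock s0 (WPoint.s p) t - ∑ v, WPoint.y p v t)) with hεdef
  have hε : 0 < ε := by
    refine lt_min (lt_min (by linarith) (by linarith)) (lt_min (lt_min (by linarith) (by linarith)) (by linarith))
  have hεg : ε ≤ prevStock s0 (WPoint.s p) t - ∑ v, WPoint.y p v t :=
    (min_le_right _ _).trans (min_le_right _ _)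
  have hεc : ∀ c, c = c1 ∨ c = c2 →
      ε ≤ cval (WPoint.x p) (WPoint.y p) t c - cval Lx Ly t c ∧
      ε ≤ cval Ux Uy t c - cval (WPoint.x p) (WPoint.y p) t c := by
    rintro c (rfl | rfl)
    · exact ⟨(min_le_left _ _).trans (min_le_left _ _),
        (min_le_left _ _).trans (min_le_right _ _)⟩
    · exact ⟨(min_le_right _ _).trans ((min_le_left _ _).trans (min_le_left _ _)),
        (min_le_right _ _).trans ((min_le_left _ _).trans (min_le_right _ _))⟩
  -- membership of perturbed points
  have hmem : ∀ a : ℝ, |a| ≤ ε → pertPoint p c1 c2 t a ∈ Qset s0 Ls Us Lx Ux Ly Uy C := by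
    intro a ha
    have haa : ∀ c, |a * pert c1 c2 c| ≤ ε := by
      intro c
      rw [abs_mul]
      calc |a| * |pert c1 c2 c| ≤ ε * 1 :=
        mul_le_mul ha (pert_abs_le c1 c2 hne c) (abs_nonneg _) hε.le
      _ = ε := mul_one ε
    refine ⟨?_, ?_, ?_, ?_, ?_, ?_, ?_, ?_⟩
    · -- balance
      intro t'
      rw [pertPoint_sum_x, pertPoint_sum_y, pertPoint_s]
      have hb := hbal t'
      have hnet : (if t' = t then a * ∑ v, pert c1 c2 (true, v) else 0) =
          (if t' = t then a * ∑ v, pert c1 c2 (false, v) else 0) := by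
        rw [pert_net]
      show WPoint.s p t' = _
      rw [hb]
      rw [hnet]
      ring
    · -- stock bounds
      intro t'
      rw [pertPoint_s]
      exact hsb t'
    · -- sales bound
      intro t'
      rw [pertPoint_sum_y, pertPoint_s]
      by_cases h : t' = t
      · subst h
        rcases pert_sum_false c1 c2 with h0 | h0 <;> rw [h0] <;> simp only [if_true, mul_zero, mul_one, add_zero]
        · linarith
        · have := le_abs_self a
          linarith
      · simp only [h, if_false, add_zero]
        exact hsale t'
    · -- complementarity
      intro c hcC
      have hprod := hcomp c hcC
      obtain ⟨_, hB1, hB2⟩ := hC c hcC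
      have hfrozen : ∀ (u : WVar V T) (B : ℝ),
          (B = 0 ∨ B = u.lb Lx Ly ∨ B = u.ub Ux Uy) →
          u.val (WPoint.x p) (WPoint.y p) = B →
          u.val (WPoint.x (pertPoint p c1 c2 t a)) (WPoint.y (pertPoint p c1 c2 t a)) = B := by
        intro u B hB hval0
        rw [pertPoint_val, hval0]
        have hzero : (if u.t = t then a * pert c1 c2 (u.isX, u.v) else 0) = 0 := by
          by_cases ht : u.t = t
          · rw [if_pos ht]
            have hd : pert c1 c2 (u.isX, u.v) = 0 := by
              refine pert_eq_zero c1 c2 _ ?_ ?_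
              · intro hEq
                obtain ⟨h0, hl, hu⟩ := hfrac _ (Or.inl hEq)
                have hv : cval (WPoint.x p) (WPoint.y p) t (u.isX, u.v) = B := by
                  rw [← hval0]
                  obtain ⟨b, v, t''⟩ := u
                  simp only at ht
                  subst ht
                  cases b <;> simp [cval, WVar.val]
                rcases hB with h | h | h
                · exact h0 (hv.trans h)
                · refine hl (hv.trans (h.trans ?_))
                  obtain ⟨b, v, t''⟩ := u
                  simp only at ht
                  subst ht
                  cases b <;> simp [cval, WVar.lb]
                · refine hu (hv.trans (h.trans ?_))
                  obtain ⟨b, v, t''⟩ := u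
                  simp only at ht
                  subst ht
                  cases b <;> simp [cval, WVar.ub]
              · intro hEq
                obtain ⟨h0, hl, hu⟩ := hfrac _ (Or.inr hEq)
                have hv : cval (WPoint.x p) (WPoint.y p) t (u.isX, u.v) = B := by
                  rw [← hval0]
                  obtain ⟨b, v, t''⟩ := u
                  simp only at ht
                  subst ht
                  cases b <;> simp [cval, WVar.val]
                rcases hB with h | h | h
                · exact h0 (hv.trans h)
                · refine hl (hv.trans (h.trans ?_))
                  obtain ⟨b, v, t''⟩ := u
                  simp only at ht
                  subst ht
                  cases b <;> simp [cval, WVar.lb]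
                · refine hu (hv.trans (h.trans ?_))
                  obtain ⟨b, v, t''⟩ := u
                  simp only at ht
                  subst ht
                  cases b <;> simp [cval, WVar.ub]
            rw [hd, mul_zero]
          · rw [if_neg ht]
        rw [hzero, add_zero]
      rcases mul_eq_zero.1 hprod with h | h
      · have := hfrozen c.V1 c.B1 hB1 (by linarith)
        rw [this]
        simp
      · have := hfrozen c.V2 c.B2 hB2 (by linarith)
        rw [this]
        simp
    · -- y bounds
      intro v t'
      have hzz : WPoint.z (pertPoint p c1 c2 t a) = WPoint.z p := rfl
      have hyy : WPoint.y (pertPoint p c1 c2 t a) v t' =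
          WPoint.y p v t' + (if t' = t then a * pert c1 c2 (false, v) else 0) := rfl
      rw [hzz, hyy]
      by_cases ht : t' = t
      · rw [if_pos ht]
        subst ht
        by_cases hd : pert c1 c2 (false, v) = 0
        · rw [hd, mul_zero, add_zero]
          exact hyb v t'
        · have hcc : (false, v) = c1 ∨ (false, v) = c2 := by
            by_contra hcon
            push_neg at hcon
            exact hd (pert_eq_zero c1 c2 _ hcon.1 hcon.2)
          obtain ⟨hz1, hlo, hhi⟩ := hind _ hcc
          obtain ⟨hεlo, hεhi⟩ := hεc _ hcc
          simp only [cval, Bool.false_eq_true, if_false] at hz1 hlo hhi hεlo hεhi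
          rw [hz1, mul_one, mul_one]
          have h1 := haa (false, v)
          have h2 := le_abs_self (a * pert c1 c2 (false, v))
          have h3 := neg_abs_le (a * pert c1 c2 (false, v))
          constructor <;> linarith
      · rw [if_neg ht, add_zero]
        exact hyb v t'
    · -- x bounds
      intro v t'
      have hww : WPoint.w (pertPoint p c1 c2 t a) = WPoint.w p := rfl
      have hxx : WPoint.x (pertPoint p c1 c2 t a) v t' =
          WPoint.x p v t' + (if t' = t then a * pert c1 c2 (true, v) else 0) := rfl
      rw [hww, hxx]
      by_cases ht : t' = t
      · rw [if_pos ht]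
        subst ht
        by_cases hd : pert c1 c2 (true, v) = 0
        · rw [hd, mul_zero, add_zero]
          exact hxb v t'
        · have hcc : (true, v) = c1 ∨ (true, v) = c2 := by
            by_contra hcon
            push_neg at hcon
            exact hd (pert_eq_zero c1 c2 _ hcon.1 hcon.2)
          obtain ⟨hw1', hlo, hhi⟩ := hind _ hcc
          obtain ⟨hεlo, hεhi⟩ := hεc _ hcc
          simp only [cval, if_true] at hw1' hlo hhi hεlo hεhi
          rw [hw1', mul_one, mul_one]
          have h1 := haa (true, v)
          have h2 := le_abs_self (a * pert c1 c2 (true, v))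
          have h3 := neg_abs_le (a * pert c1 c2 (true, v))
          constructor <;> linarith
      · rw [if_neg ht, add_zero]
        exact hxb v t'
    · intro v t'
      rw [pertPoint_w]
      exact hw v t'
    · intro v t'
      rw [pertPoint_z]
      exact hz v t'
  -- conclude via extremality
  obtain ⟨hpc, hext⟩ := hp
  have h1 : pertPoint p c1 c2 t ε ∈ convexHull ℝ (Qset s0 Ls Us Lx Ux Ly Uy C) :=
    subset_convexHull ℝ _ (hmem ε (by rw [abs_of_pos hε]))
  have h2 : pertPoint p c1 c2 t (-ε) ∈ convexHull ℝ (Qset s0 Ls Us Lx Ux Ly Uy C) :=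
    subset_convexHull ℝ _ (hmem (-ε) (by rw [abs_neg, abs_of_pos hε]))
  have hseg : p ∈ openSegment ℝ (pertPoint p c1 c2 t ε) (pertPoint p c1 c2 t (-ε)) := by
    refine ⟨1/2, 1/2, by norm_num, by norm_num, by norm_num, ?_⟩
    refine Prod.ext ?_ (Prod.ext ?_ (Prod.ext ?_ (Prod.ext ?_ ?_)))
    · funext v t'
      show (1/2 : ℝ) * (WPoint.x p v t' + (if t' = t then ε * pert c1 c2 (true, v) else 0)) +
          (1/2 : ℝ) * (WPoint.x p v t' + (if t' = t then (-ε) * pert c1 c2 (true, v) else 0)) =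
          WPoint.x p v t'
      by_cases h : t' = t <;> simp only [h, if_true, if_false] <;> ring
    · funext v t'
      show (1/2 : ℝ) * (WPoint.y p v t' + (if t' = t then ε * pert c1 c2 (false, v) else 0)) +
          (1/2 : ℝ) * (WPoint.y p v t' + (if t' = t then (-ε) * pert c1 c2 (false, v) else 0)) =
          WPoint.y p v t'
      by_cases h : t' = t <;> simp only [h, if_true, if_false] <;> ring
    · funext v t'
      show (1/2 : ℝ) * WPoint.w p v t' + (1/2 : ℝ) * WPoint.w p v t' = WPoint.w p v t'
      ring
    · funext v t'
      show (1/2 : ℝ) * WPoint.z p v t' + (1/2 : ℝ) * WPoint.z p v t' = WPoint.z p v t'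
      ring
    · funext t'
      show (1/2 : ℝ) * WPoint.s p t' + (1/2 : ℝ) * WPoint.s p t' = WPoint.s p t'
      ring
  have hEq := hext h1 h2 hseg
  have hkey : cval (WPoint.x (pertPoint p c1 c2 t ε)) (WPoint.y (pertPoint p c1 c2 t ε)) t c1 =
      cval (WPoint.x p) (WPoint.y p) t c1 + ε := by
    have hp1 : pert c1 c2 c1 = 1 := by
      have h0 : (if c1 = c2 then (if c1.1 = c2.1 then (-1:ℝ) else 1) else 0) = 0 := if_neg hne
      simp [pert, h0]
    obtain ⟨b, v⟩ := c1
    cases b <;>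
      simp only [cval, Bool.false_eq_true, if_false, if_true, pertPoint_x, pertPoint_y] <;>
      rw [hp1, mul_one]
  rw [hEq] at hkey
  linarith
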